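/- arXiv:1810.07896 — 3 statements merged into one kernel-verified Lean document; each statement's English description precedes it below -/
import Mathlib

section
/- For any λ > 0, any r ∈ ℝⁿ, and any v ∈ ℝⁿ with ‖v‖_∞ ≤ 1/λ, the function Φ_λ(r) = Σᵢ cosh(λ rᵢ) satisfies Φ_λ(r + v) ≤ Φ_λ(r) + ⟨∇Φ_λ(r), v⟩ + 2 Σᵢ λ² cosh(λ rᵢ) vᵢ². -/
open Real Finset

lemma exp_le_quad (x : ℝ) (hx : |x| ≤ 1) : Real.exp x ≤ 1 + x + 2 * x ^ 2 := by
  have h := Real.exp_bound hx (by norm_num : 0 < 2)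
  simp [Finset.sum_range_succ] at h
  rw [abs_le] at h
  nlinarith [sq_abs x, sq_nonneg x]

lemma cosh_quad_bound (a b : ℝ) (hb : |b| ≤ 1) :
    Real.cosh (a + b) ≤ Real.cosh a + Real.sinh a * b + 2 * Real.cosh a * b ^ 2 := by
  have h1 := exp_le_quad b hb
  have h2 := exp_le_quad (-b) (by rwa [abs_neg])
  have ha := Real.exp_pos a
  have ha' := Real.exp_pos (-a)
  rw [Real.cosh_eq, Real.cosh_eq, Real.sinh_eq, show -(a+b) = -a + -b by ring,
    Real.exp_add, Real.exp_add]
  nlinarith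

/-- For `λ > 0`, `r v : ℝⁿ` with `‖v‖_∞ ≤ 1/λ`, the potential `Φ_λ(r) = Σᵢ cosh(λ rᵢ)`
satisfies `Φ_λ(r+v) ≤ Φ_λ(r) + ⟨∇Φ_λ(r), v⟩ + 2 Σᵢ λ² cosh(λ rᵢ) vᵢ²`. -/
theorem potential_second_order_bound {n : ℕ} (lam : ℝ) (hlam : 0 < lam)
    (r v : Fin n → ℝ) (hv : ∀ i, |v i| ≤ 1 / lam) :
    ∑ i, Real.cosh (lam * (r i + v i)) ≤
      ∑ i, Real.cosh (lam * r i)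
        + ∑ i, (lam * Real.sinh (lam * r i)) * v i
        + 2 * ∑ i, lam ^ 2 * Real.cosh (lam * r i) * v i ^ 2 := by
  have key : ∀ i, Real.cosh (lam * (r i + v i)) ≤
      Real.cosh (lam * r i) + (lam * Real.sinh (lam * r i)) * v i
        + 2 * (lam ^ 2 * Real.cosh (lam * r i) * v i ^ 2) := by
    intro i
    have hb : |lam * v i| ≤ 1 := by
      rw [abs_mul, abs_of_pos hlam]
      calc lam * |v i| ≤ lam * (1 / lam) := by
            exact mul_le_mul_of_nonneg_left (hv i) hlam.le
        _ = 1 := by field_simp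
    have := cosh_quad_bound (lam * r i) (lam * v i) hb
    calc Real.cosh (lam * (r i + v i)) = Real.cosh (lam * r i + lam * v i) := by ring_nf
      _ ≤ Real.cosh (lam * r i) + Real.sinh (lam * r i) * (lam * v i)
          + 2 * Real.cosh (lam * r i) * (lam * v i) ^ 2 := this
      _ = Real.cosh (lam * r i) + (lam * Real.sinh (lam * r i)) * v i
          + 2 * (lam ^ 2 * Real.cosh (lam * r i) * v i ^ 2) := by ring
  calc ∑ i, Real.cosh (lam * (r i + v i))
      ≤ ∑ i, (Real.cosh (lam * r i) + (lam * Real.sinh (lam * r i)) * v i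
          + 2 * (lam ^ 2 * Real.cosh (lam * r i) * v i ^ 2)) :=
        Finset.sum_le_sum fun i _ => key i
    _ = _ := by rw [Finset.sum_add_distrib, Finset.sum_add_distrib, ← Finset.mul_sum]
end

section
/- With ψ as the capped quadratic potential with parameter ε ∈ (0,1/4) (ψ(x) = x²/(2ε) for |x|≤ε, ψ(x) = ε − (2ε−|x|)²/(2ε) for ε<|x|≤2ε, ψ(x)=ε for |x|>2ε), for all real x, y with |y| ≤ min(ε, |x|·(1 − 1/log n)) and |x| ≥ ε/100 and n ≥ 4, we have ψ(x) − ψ(y) ≥ c·ε/log n for some universal constant c > 0. -/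
/-- The capped quadratic potential. -/
noncomputable def psi (ε x : ℝ) : ℝ :=
  if |x| ≤ ε then x ^ 2 / (2 * ε)
  else if |x| ≤ 2 * ε then ε - (2 * ε - |x|) ^ 2 / (2 * ε)
  else ε

lemma psi_ge (ε x b : ℝ) (hε : 0 < ε) (hb1 : ε ≤ b) (hb2 : b ≤ 2*ε) (hbx : b ≤ |x|) :
    ε - (2*ε - b)^2/(2*ε) ≤ psi ε x := by
  have hε2 : (0:ℝ) < 2*ε := by linarith
  unfold psi
  split_ifs with h1 h2
  · have hbε : b = ε := le_antisymm (hbx.trans h1) hb1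
    have hx2 : x^2 = ε^2 := by
      rw [← sq_abs x, le_antisymm h1 (hbε ▸ hbx)]
    rw [hbε, hx2, show (2*ε - ε)^2 = ε^2 by ring]
    have h : ε^2/(2*ε) = ε/2 := by field_simp
    rw [h]; linarith
  · have h0 : 0 ≤ 2*ε - |x| := by linarith
    have hsq : (2*ε - |x|)^2 ≤ (2*ε - b)^2 := by nlinarith
    have := (div_le_div_iff_of_pos_right hε2).mpr hsq
    linarith
  · have h0 : 0 ≤ (2*ε - b)^2/(2*ε) := by positivity
    linarith

set_option maxHeartbeats 2000000 in
/-- Quantitative gap for the capped quadratic potential: there is a universal constant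
`c > 0` such that for all `n ≥ 4`, `ε ∈ (0, 1/4)`, and reals `x, y` with
`|y| ≤ min(ε, |x|(1 − 1/log n))` and `|x| ≥ ε/100`, we have
`ψ(x) − ψ(y) ≥ c ε / log n`. -/
theorem psi_gap :
    ∃ c : ℝ, 0 < c ∧ ∀ (n : ℕ) (ε x y : ℝ), 4 ≤ n → 0 < ε → ε < 1 / 4 →
      |y| ≤ min ε (|x| * (1 - 1 / Real.log n)) → ε / 100 ≤ |x| →
      c * ε / Real.log n ≤ psi ε x - psi ε y := by
  refine ⟨1/20000, by norm_num, ?_⟩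
  intro n ε x y hn hε hε4 hy hx
  have hε2 : (0:ℝ) < 2*ε := by linarith
  set L := Real.log n with hLdef
  have hL : (1:ℝ) < L := by
    have h4 : (4:ℝ) ≤ (n:ℝ) := by exact_mod_cast hn
    have hlog : Real.log 4 ≤ L := by
      rw [hLdef]
      exact Real.log_le_log (by norm_num) h4
    have h2 : Real.log 4 = 2 * Real.log 2 := by
      rw [show (4:ℝ) = 2^2 by norm_num, Real.log_pow]; push_cast; ring
    nlinarith [Real.log_two_gt_d9]
  have hL0 : (0:ℝ) < L := by linarith
  set u : ℝ := 1/L with hu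
  have hu0 : 0 < u := by positivity
  have hu1 : u < 1 := by rw [hu, div_lt_one hL0]; exact hL
  have hgoal : (1/20000:ℝ) * ε / L = ε * u / 20000 := by rw [hu]; ring
  rw [hgoal]
  clear_value u L
  have hs0 : (0:ℝ) ≤ |y| := abs_nonneg y
  have ht0 : (0:ℝ) ≤ |x| := abs_nonneg x
  have hyε : |y| ≤ ε := hy.trans (min_le_left _ _)
  have hyt : |y| ≤ |x| * (1 - u) := hy.trans (min_le_right _ _)
  have hpy : psi ε y = |y|^2/(2*ε) := by
    unfold psi; rw [if_pos hyε, sq_abs]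
  rw [hpy]
  by_cases hc : |x| ≤ ε
  · have hpx : psi ε x = |x|^2/(2*ε) := by
      unfold psi; rw [if_pos hc, sq_abs]
    rw [hpx, div_sub_div_same, le_div_iff₀ hε2]
    have h1 : |y|^2 ≤ (|x| * (1-u))^2 := pow_le_pow_left₀ hs0 hyt 2
    have h2 : (ε/100)^2 ≤ |x|^2 := pow_le_pow_left₀ (by positivity) hx 2
    have h3 : (0:ℝ) ≤ |x|^2 * u * (1-u) := by
      have : (0:ℝ) ≤ 1 - u := by linarith
      positivity
    have h4 : (ε/100)^2 * u ≤ |x|^2 * u := mul_le_mul_of_nonneg_right h2 hu0.le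
    nlinarith [h1, h3, h4, hε, hu0]
  · push_neg at hc
    by_cases hb : |y| ≤ ε * (1 - u/2)
    · have hpx := psi_ge ε x ε hε le_rfl (by linarith) hc.le
      have key : ε - (2*ε - ε)^2/(2*ε) = ε/2 := by field_simp; ring
      rw [key] at hpx
      have h1 : |y|^2 ≤ (ε*(1-u/2))^2 := pow_le_pow_left₀ hs0 hb 2
      have h2 := (div_le_div_iff_of_pos_right hε2).mpr h1
      have heq : (ε*(1-u/2))^2/(2*ε) = ε*(1-u/2)^2/2 := by field_simp
      rw [heq] at h2
      have h3 : (0:ℝ) ≤ ε * u * (1-u) := by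
        have : (0:ℝ) ≤ 1 - u := by linarith
        positivity
      nlinarith [hpx, h2, h3, hε, hu0]
    · push_neg at hb
      have htb : ε*(1+u/2) ≤ |x| := by
        by_contra hcon
        push_neg at hcon
        have h1u : (0:ℝ) < 1 - u := by linarith
        have hm : |x| * (1-u) < (ε*(1+u/2)) * (1-u) :=
          mul_lt_mul_of_pos_right hcon h1u
        have hq : (ε*(1+u/2)) * (1-u) ≤ ε*(1-u/2) := by
          nlinarith [mul_nonneg hε.le (sq_nonneg u)]
        linarith [hyt, hb]
      have hA : ε ≤ ε*(1+u/2) := by nlinarith [mul_pos hε hu0]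
      have hB : ε*(1+u/2) ≤ 2*ε := by nlinarith [mul_lt_mul_of_pos_left hu1 hε]
      have hpx := psi_ge ε x (ε*(1+u/2)) hε hA hB htb
      have heq2 : ε - (2*ε - ε*(1+u/2))^2/(2*ε) = ε - ε*(1-u/2)^2/2 := by
        field_simp; ring
      rw [heq2] at hpx
      have h1 : |y|^2 ≤ ε^2 := pow_le_pow_left₀ hs0 hyε 2
      have h2 := (div_le_div_iff_of_pos_right hε2).mpr h1
      have heq3 : ε^2/(2*ε) = ε/2 := by field_simp
      rw [heq3] at h2
      have h3 : (0:ℝ) ≤ ε * u * (1-u) := by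
        have : (0:ℝ) ≤ 1 - u := by linarith
        positivity
      nlinarith [hpx, h2, h3, hε, hu0]
end

section
/- Let μ ∈ ℝⁿ be positive, and suppose random vectors 𝛿̃_x, 𝛿̃_s satisfy ‖E[x⁻¹𝛿̃_x]‖₂ ≤ 2ε, ‖E[s⁻¹𝛿̃_s]‖₂ ≤ 2ε, Var[x_i⁻¹𝛿̃_{x,i}] ≤ 2ε²/k, Var[s_i⁻¹𝛿̃_{s,i}] ≤ 2ε²/k for all i, where μ = xs. Then ‖E[μ⁻¹ 𝛿̃_x 𝛿̃_s]‖₂ ≤ 4ε² + 2√n·ε²/k (entrywise product 𝛿̃_x 𝛿̃_s). -/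
open MeasureTheory ProbabilityTheory Finset

private lemma aux_integrable_mul {Ω : Type*} [MeasurableSpace Ω] {μ : Measure Ω}
    [IsProbabilityMeasure μ] {X Y : Ω → ℝ} (hX : MemLp X 2 μ) (hY : MemLp Y 2 μ) :
    Integrable (fun ω => X ω * Y ω) μ := by
  have hX2 : Integrable (fun ω => X ω ^ 2) μ := hX.integrable_sq
  have hY2 : Integrable (fun ω => Y ω ^ 2) μ := hY.integrable_sq
  refine Integrable.mono' ((hX2.add hY2).div_const 2)
    (hX.aestronglyMeasurable.mul hY.aestronglyMeasurable) ?_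
  filter_upwards with ω
  rw [Real.norm_eq_abs, abs_mul]
  simp only [Pi.add_apply]
  nlinarith [sq_nonneg (|X ω| - |Y ω|), sq_abs (X ω), sq_abs (Y ω)]

private lemma aux_abs_cov_le {Ω : Type*} [MeasurableSpace Ω] {μ : Measure Ω}
    [IsProbabilityMeasure μ] {X Y : Ω → ℝ} (hX : MemLp X 2 μ) (hY : MemLp Y 2 μ) :
    |μ[fun ω => X ω * Y ω] - μ[X] * μ[Y]| ≤ (variance X μ + variance Y μ) / 2 := by
  have hXY : Integrable (fun ω => X ω * Y ω) μ := aux_integrable_mul hX hY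
  have hX2 : Integrable (fun ω => X ω ^ 2) μ := hX.integrable_sq
  have hY2 : Integrable (fun ω => Y ω ^ 2) μ := hY.integrable_sq
  have hX1 : Integrable X μ := hX.integrable one_le_two
  have hY1 : Integrable Y μ := hY.integrable one_le_two
  have hsub : MemLp (fun ω => X ω - Y ω) 2 μ := hX.sub hY
  have hadd : MemLp (fun ω => X ω + Y ω) 2 μ := hX.add hY
  have v1 := variance_nonneg (fun ω => X ω - Y ω) μ
  have v2 := variance_nonneg (fun ω => X ω + Y ω) μ
  rw [variance_eq_sub hsub] at v1
  rw [variance_eq_sub hadd] at v2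
  rw [variance_eq_sub hX, variance_eq_sub hY]
  have e1 : μ[(fun ω => X ω - Y ω) ^ 2]
      = μ[fun ω => X ω ^ 2] - 2 * μ[fun ω => X ω * Y ω] + μ[fun ω => Y ω ^ 2] := by
    have h : ((fun ω => X ω - Y ω) ^ 2)
        = fun ω => X ω ^ 2 - 2 * (X ω * Y ω) + Y ω ^ 2 := by
      funext ω; simp [Pi.pow_apply]; ring
    have hf : Integrable (fun ω => X ω ^ 2 - 2 * (X ω * Y ω)) μ :=
      hX2.sub (hXY.const_mul 2)
    have hg : Integrable (fun ω => 2 * (X ω * Y ω)) μ := hXY.const_mul 2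
    rw [h]
    show (∫ ω, (X ω ^ 2 - 2 * (X ω * Y ω) + Y ω ^ 2) ∂μ) = _
    rw [integral_add hf hY2, integral_sub hX2 hg, integral_const_mul 2 _]
  have e2 : μ[(fun ω => X ω + Y ω) ^ 2]
      = μ[fun ω => X ω ^ 2] + 2 * μ[fun ω => X ω * Y ω] + μ[fun ω => Y ω ^ 2] := by
    have h : ((fun ω => X ω + Y ω) ^ 2)
        = fun ω => X ω ^ 2 + 2 * (X ω * Y ω) + Y ω ^ 2 := by
      funext ω; simp [Pi.pow_apply]; ring
    have hf : Integrable (fun ω => X ω ^ 2 + 2 * (X ω * Y ω)) μ :=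
      hX2.add (hXY.const_mul 2)
    have hg : Integrable (fun ω => 2 * (X ω * Y ω)) μ := hXY.const_mul 2
    rw [h]
    show (∫ ω, (X ω ^ 2 + 2 * (X ω * Y ω) + Y ω ^ 2) ∂μ) = _
    rw [integral_add hf hY2, integral_add hX2 hg, integral_const_mul 2 _]
  have e3 : μ[fun ω => X ω - Y ω] = μ[X] - μ[Y] := integral_sub hX1 hY1
  have e4 : μ[fun ω => X ω + Y ω] = μ[X] + μ[Y] := integral_add hX1 hY1
  rw [e1, e3] at v1
  rw [e2, e4] at v2
  have hXsq : μ[X ^ 2] = μ[fun ω => X ω ^ 2] := rfl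
  have hYsq : μ[Y ^ 2] = μ[fun ω => Y ω ^ 2] := rfl
  rw [hXsq, hYsq, abs_le]
  constructor <;> nlinarith

private lemma aux_l2_triangle {n : ℕ} (u v : Fin n → ℝ) :
    Real.sqrt (∑ i, (u i + v i) ^ 2) ≤
      Real.sqrt (∑ i, u i ^ 2) + Real.sqrt (∑ i, v i ^ 2) := by
  have hu : (0:ℝ) ≤ ∑ i, u i ^ 2 := Finset.sum_nonneg fun i _ => sq_nonneg _
  have hv : (0:ℝ) ≤ ∑ i, v i ^ 2 := Finset.sum_nonneg fun i _ => sq_nonneg _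
  have hcs : ∑ i, u i * v i ≤ Real.sqrt (∑ i, u i ^ 2) * Real.sqrt (∑ i, v i ^ 2) := by
    have h := Finset.sum_mul_sq_le_sq_mul_sq Finset.univ u v
    have h2 : ∑ i, u i * v i ≤ |∑ i, u i * v i| := le_abs_self _
    calc ∑ i, u i * v i ≤ |∑ i, u i * v i| := h2
      _ = Real.sqrt ((∑ i, u i * v i) ^ 2) := (Real.sqrt_sq_eq_abs _).symm
      _ ≤ Real.sqrt ((∑ i, u i ^ 2) * ∑ i, v i ^ 2) := Real.sqrt_le_sqrt h
      _ = Real.sqrt (∑ i, u i ^ 2) * Real.sqrt (∑ i, v i ^ 2) := Real.sqrt_mul hu _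
  have key : ∑ i, (u i + v i) ^ 2 ≤
      (Real.sqrt (∑ i, u i ^ 2) + Real.sqrt (∑ i, v i ^ 2)) ^ 2 := by
    have e : ∑ i, (u i + v i) ^ 2 = ∑ i, u i ^ 2 + 2 * ∑ i, u i * v i + ∑ i, v i ^ 2 := by
      rw [Finset.mul_sum, ← Finset.sum_add_distrib, ← Finset.sum_add_distrib]
      exact Finset.sum_congr rfl fun i _ => by ring
    have su := Real.sq_sqrt hu
    have sv := Real.sq_sqrt hv
    nlinarith [Real.sqrt_nonneg (∑ i, u i ^ 2), Real.sqrt_nonneg (∑ i, v i ^ 2)]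
  calc Real.sqrt (∑ i, (u i + v i) ^ 2)
      ≤ Real.sqrt ((Real.sqrt (∑ i, u i ^ 2) + Real.sqrt (∑ i, v i ^ 2)) ^ 2) :=
        Real.sqrt_le_sqrt key
    _ = Real.sqrt (∑ i, u i ^ 2) + Real.sqrt (∑ i, v i ^ 2) := by
        rw [Real.sqrt_sq (by positivity)]

/-- If `‖E[x⁻¹δ̃x]‖₂ ≤ 2ε`, `‖E[s⁻¹δ̃s]‖₂ ≤ 2ε` and each coordinate has variance at most
`2ε²/k`, then `‖E[μ⁻¹ δ̃x δ̃s]‖₂ ≤ 4ε² + 2√n ε²/k` where `μ = xs` (entrywise product). -/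
theorem second_order_term_bound {Ω : Type*} [MeasurableSpace Ω] {μ : Measure Ω}
    [IsProbabilityMeasure μ] {n : ℕ} (x s : Fin n → ℝ)
    (hx : ∀ i, 0 < x i) (hs : ∀ i, 0 < s i)
    (dx ds : Fin n → Ω → ℝ) (ε k : ℝ) (hε : 0 ≤ ε) (hk : 0 < k)
    (hdx2 : ∀ i, MemLp (dx i) 2 μ) (hds2 : ∀ i, MemLp (ds i) 2 μ)
    (hEx : Real.sqrt (∑ i, (μ[fun ω => (x i)⁻¹ * dx i ω]) ^ 2) ≤ 2 * ε)
    (hEs : Real.sqrt (∑ i, (μ[fun ω => (s i)⁻¹ * ds i ω]) ^ 2) ≤ 2 * ε)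
    (hVx : ∀ i, variance (fun ω => (x i)⁻¹ * dx i ω) μ ≤ 2 * ε ^ 2 / k)
    (hVs : ∀ i, variance (fun ω => (s i)⁻¹ * ds i ω) μ ≤ 2 * ε ^ 2 / k) :
    Real.sqrt (∑ i, (μ[fun ω => (x i * s i)⁻¹ * (dx i ω * ds i ω)]) ^ 2) ≤
      4 * ε ^ 2 + 2 * Real.sqrt n * ε ^ 2 / k := by
  set X : Fin n → Ω → ℝ := fun i ω => (x i)⁻¹ * dx i ω with hXdef
  set Y : Fin n → Ω → ℝ := fun i ω => (s i)⁻¹ * ds i ω with hYdef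
  have hXmem : ∀ i, MemLp (X i) 2 μ := fun i => (hdx2 i).const_mul _
  have hYmem : ∀ i, MemLp (Y i) 2 μ := fun i => (hds2 i).const_mul _
  set a : Fin n → ℝ := fun i => μ[X i] with hadef
  set b : Fin n → ℝ := fun i => μ[Y i] with hbdef
  set c : ℝ := 2 * ε ^ 2 / k with hcdef
  have hc : 0 ≤ c := by positivity
  -- rewrite the integrand
  have hint : ∀ i, (fun ω => (x i * s i)⁻¹ * (dx i ω * ds i ω)) = fun ω => X i ω * Y i ω := by
    intro i; funext ω
    simp only [hXdef, hYdef]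
    rw [mul_inv]
    ring
  -- per-coordinate bound
  have hEi : ∀ i, |μ[fun ω => (x i * s i)⁻¹ * (dx i ω * ds i ω)]| ≤ |a i * b i| + c := by
    intro i
    rw [hint i]
    have hcov := aux_abs_cov_le (hXmem i) (hYmem i)
    have hvar : (variance (X i) μ + variance (Y i) μ) / 2 ≤ c := by
      have h1 := hVx i
      have h2 := hVs i
      simp only [hXdef, hYdef]
      linarith
    have h4 := abs_sub_abs_le_abs_sub (μ[fun ω => X i ω * Y i ω]) (μ[X i] * μ[Y i])
    have hab : a i * b i = μ[X i] * μ[Y i] := rfl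
    rw [hab]
    linarith
  -- sum bound
  have step1 : Real.sqrt (∑ i, (μ[fun ω => (x i * s i)⁻¹ * (dx i ω * ds i ω)]) ^ 2)
      ≤ Real.sqrt (∑ i, (|a i * b i| + c) ^ 2) := by
    apply Real.sqrt_le_sqrt
    apply Finset.sum_le_sum
    intro i _
    have h1 := hEi i
    have h2 : (μ[fun ω => (x i * s i)⁻¹ * (dx i ω * ds i ω)]) ^ 2
        = |μ[fun ω => (x i * s i)⁻¹ * (dx i ω * ds i ω)]| ^ 2 := (sq_abs _).symm
    rw [h2]
    exact pow_le_pow_left₀ (abs_nonneg _) h1 2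
  have step2 : Real.sqrt (∑ i, (|a i * b i| + c) ^ 2)
      ≤ Real.sqrt (∑ i, |a i * b i| ^ 2) + Real.sqrt (∑ i, (fun _ : Fin n => c) i ^ 2) :=
    aux_l2_triangle (fun i => |a i * b i|) (fun _ => c)
  have ha2 : ∑ i, a i ^ 2 ≤ (2 * ε) ^ 2 := by
    have h : Real.sqrt (∑ i, a i ^ 2) ^ 2 = ∑ i, a i ^ 2 :=
      Real.sq_sqrt (Finset.sum_nonneg fun i _ => sq_nonneg (a i))
    calc ∑ i, a i ^ 2 = Real.sqrt (∑ i, a i ^ 2) ^ 2 := h.symm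
      _ ≤ (2 * ε) ^ 2 := pow_le_pow_left₀ (Real.sqrt_nonneg _) hEx 2
  have hb2 : ∑ i, b i ^ 2 ≤ (2 * ε) ^ 2 := by
    have h : Real.sqrt (∑ i, b i ^ 2) ^ 2 = ∑ i, b i ^ 2 :=
      Real.sq_sqrt (Finset.sum_nonneg fun i _ => sq_nonneg (b i))
    calc ∑ i, b i ^ 2 = Real.sqrt (∑ i, b i ^ 2) ^ 2 := h.symm
      _ ≤ (2 * ε) ^ 2 := pow_le_pow_left₀ (Real.sqrt_nonneg _) hEs 2
  have hab : Real.sqrt (∑ i, |a i * b i| ^ 2) ≤ 4 * ε ^ 2 := by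
    have hsum : ∑ i, |a i * b i| ^ 2 ≤ (2 * ε) ^ 2 * (2 * ε) ^ 2 := by
      calc ∑ i, |a i * b i| ^ 2 = ∑ i, a i ^ 2 * b i ^ 2 := by
            congr 1; funext i; rw [sq_abs, mul_pow]
        _ ≤ ∑ i, a i ^ 2 * (2 * ε) ^ 2 := by
            apply Finset.sum_le_sum
            intro i _
            have : b i ^ 2 ≤ (2 * ε) ^ 2 :=
              le_trans (Finset.single_le_sum (fun j _ => sq_nonneg (b j))
                (Finset.mem_univ i)) hb2
            exact mul_le_mul_of_nonneg_left this (sq_nonneg _)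
        _ = (∑ i, a i ^ 2) * (2 * ε) ^ 2 := by rw [← Finset.sum_mul]
        _ ≤ (2 * ε) ^ 2 * (2 * ε) ^ 2 :=
            mul_le_mul_of_nonneg_right ha2 (sq_nonneg _)
    calc Real.sqrt (∑ i, |a i * b i| ^ 2)
        ≤ Real.sqrt ((2 * ε) ^ 2 * (2 * ε) ^ 2) := Real.sqrt_le_sqrt hsum
      _ = 4 * ε ^ 2 := by
          rw [show (2 * ε) ^ 2 * (2 * ε) ^ 2 = (4 * ε ^ 2) ^ 2 by ring,
            Real.sqrt_sq (by positivity)]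
  have hconst : Real.sqrt (∑ _i : Fin n, c ^ 2) = Real.sqrt n * c := by
    rw [Finset.sum_const, Finset.card_univ, Fintype.card_fin, nsmul_eq_mul,
      Real.sqrt_mul (Nat.cast_nonneg n), Real.sqrt_sq hc]
  calc Real.sqrt (∑ i, (μ[fun ω => (x i * s i)⁻¹ * (dx i ω * ds i ω)]) ^ 2)
      ≤ Real.sqrt (∑ i, (|a i * b i| + c) ^ 2) := step1
    _ ≤ Real.sqrt (∑ i, |a i * b i| ^ 2) + Real.sqrt (∑ _i : Fin n, c ^ 2) := step2
    _ ≤ 4 * ε ^ 2 + Real.sqrt n * c := by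
        rw [hconst]; exact add_le_add_left hab _
    _ = 4 * ε ^ 2 + 2 * Real.sqrt n * ε ^ 2 / k := by
        rw [hcdef]; ring
end
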